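/- (Theorem 1, pathwise version) Suppose the arrival processes have uniformly bounded increments, i.e., there is a constant A_max such that A_i(t) − A_i(t−1) ≤ A_max for all i ∈ V and t ≥ 1, and that A_i(t)/t → λ_i as t → ∞ for every i, where λ ∈ Λ_p. Then under the queue dynamics with maximal scheduling with priority vector p, every link is rate stable: D_i(t)/t → λ_i (equivalently Q_i(t)/t → 0) as t → ∞, for every i ∈ V. -/

import Mathlib

open Finset Filter Topology

variable {V : Type*}

/-- The set `S_i^p` of higher-priority neighbors of link `i` in the interference graph `G`,
under the priority map `p` (a smaller value means a higher priority). -/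
def hpNbrs [Fintype V] [DecidableEq V] (G : SimpleGraph V) [DecidableRel G.Adj]
    (p : V → ℕ) (i : V) : Finset V :=
  (G.neighborFinset i).filter fun j => p j < p i

/-- The maximal schedule `σ(B,p)` with priority `p` on the backlogged set `B`:
`i ∈ σ(B,p)` iff `i ∈ B` and no higher-priority neighbor of `i` is in `σ(B,p)`. -/
def sched [Fintype V] [DecidableEq V] (G : SimpleGraph V) [DecidableRel G.Adj]
    (p : V → ℕ) (B : Set V) (i : V) : Prop :=
  i ∈ B ∧ ∀ j, G.Adj i j → p j < p i → ¬ sched G p B j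
termination_by p i

/-- The numerical priority values of a priority vector `p : V ≃ Fin N`
(the link `i` with `p i = 0` has the highest priority). -/
def pv [Fintype V] (p : V ≃ Fin (Fintype.card V)) : V → ℕ := fun i => (p i : ℕ)

attribute [local instance] Classical.propDecidable

/-- Cumulative departures `D_i(t)` of the queue dynamics under maximal scheduling with
priority `p`, cumulative arrival processes `A` and initial queue lengths `Q0`. -/
noncomputable def cumDep [Fintype V] [DecidableEq V] (G : SimpleGraph V) [DecidableRel G.Adj]
    (p : V → ℕ) (A : V → ℕ → ℕ) (Q0 : V → ℕ) : ℕ → V → ℕ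
  | 0, _ => 0
  | t + 1, i =>
      cumDep G p A Q0 t i +
        (if sched G p
            {j | 1 ≤ (Q0 j : ℤ) + (A j t : ℤ) - (cumDep G p A Q0 t j : ℤ)} i then 1 else 0)

/-- Queue length `Q_i(t) = Q_i(0) + A_i(t) - D_i(t)`. -/
noncomputable def queue [Fintype V] [DecidableEq V] (G : SimpleGraph V) [DecidableRel G.Adj]
    (p : V → ℕ) (A : V → ℕ → ℕ) (Q0 : V → ℕ) (t : ℕ) (i : V) : ℤ :=
  (Q0 i : ℤ) + (A i t : ℤ) - (cumDep G p A Q0 t i : ℤ)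

/-- The schedule `σ(t)` of slot `t ≥ 1`: the maximal schedule with priority `p` on the set
`B(t) = {j : Q_j(t-1) ≥ 1}` of backlogged links. -/
noncomputable def schedAt [Fintype V] [DecidableEq V] (G : SimpleGraph V) [DecidableRel G.Adj]
    (p : V → ℕ) (A : V → ℕ → ℕ) (Q0 : V → ℕ) (t : ℕ) (i : V) : Prop :=
  sched G p {j | 1 ≤ queue G p A Q0 (t - 1) j} i

/-- The lower-bound stability region `Λ_p` of maximal scheduling with priority `p`:
nonnegative rate vectors `λ` with `λ_i + Σ_{j ∈ S_i^p} λ_j ≤ 1` for every link `i`. -/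
def LambdaP [Fintype V] [DecidableEq V] (G : SimpleGraph V) [DecidableRel G.Adj]
    (p : V → ℕ) : Set (V → ℝ) :=
  {lam | (∀ i, 0 ≤ lam i) ∧ ∀ i, lam i + ∑ j ∈ hpNbrs G p i, lam j ≤ 1}

section aux

variable [Fintype V] [DecidableEq V] (G : SimpleGraph V) [DecidableRel G.Adj]
  (p : V → ℕ) (A : V → ℕ → ℕ) (Q0 : V → ℕ)

lemma cumDep_succ_eq (t : ℕ) (i : V) :
    cumDep G p A Q0 (t+1) i = cumDep G p A Q0 t i +
      (if sched G p {j | 1 ≤ queue G p A Q0 t j} i then 1 else 0) := rfl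

lemma sched_elim {B : Set V} {i : V} (hB : i ∈ B) (hns : ¬ sched G p B i) :
    ∃ j, G.Adj i j ∧ p j < p i ∧ sched G p B j := by
  rw [sched] at hns; push_neg at hns; exact hns hB

lemma cumDep_mono_succ (t : ℕ) (i : V) :
    cumDep G p A Q0 t i ≤ cumDep G p A Q0 (t+1) i := by
  rw [cumDep_succ_eq]; split <;> omega

lemma queue_nonneg (hAmono : ∀ l, Monotone (A l)) : ∀ t i, 0 ≤ queue G p A Q0 t i := by
  intro t
  induction t with
  | zero =>
    intro i
    have h0 : cumDep G p A Q0 0 i = 0 := rfl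
    simp only [queue, h0, Nat.cast_zero, sub_zero]
    positivity
  | succ t ih =>
    intro i
    have ih' := ih i
    have h1 : (A i t : ℤ) ≤ A i (t+1) := by exact_mod_cast hAmono i (Nat.le_succ t)
    by_cases hs : sched G p {j | 1 ≤ queue G p A Q0 t j} i
    · have hq : (1:ℤ) ≤ queue G p A Q0 t i := by
        rw [sched] at hs; exact hs.1
      have hD : (cumDep G p A Q0 (t+1) i : ℤ) = cumDep G p A Q0 t i + 1 := by
        rw [cumDep_succ_eq, if_pos hs]; push_cast; ring
      simp only [queue] at *
      linarith
    · have hD : (cumDep G p A Q0 (t+1) i : ℤ) = cumDep G p A Q0 t i := by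
        rw [cumDep_succ_eq, if_neg hs]; push_cast; ring
      simp only [queue] at *
      linarith

lemma slot_bound (i : V) (t : ℕ) (hq : 1 ≤ queue G p A Q0 t i) :
    1 ≤ ((cumDep G p A Q0 (t+1) i : ℤ) - cumDep G p A Q0 t i) +
      ∑ j ∈ hpNbrs G p i, ((cumDep G p A Q0 (t+1) j : ℤ) - cumDep G p A Q0 t j) := by
  have hnn : ∀ j, (0:ℤ) ≤ (cumDep G p A Q0 (t+1) j : ℤ) - cumDep G p A Q0 t j := by
    intro j
    have h := cumDep_mono_succ G p A Q0 t j
    exact sub_nonneg.2 (by exact_mod_cast h)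
  have hsumnn : (0:ℤ) ≤ ∑ j ∈ hpNbrs G p i, ((cumDep G p A Q0 (t+1) j : ℤ) - cumDep G p A Q0 t j) :=
    Finset.sum_nonneg fun j _ => hnn j
  by_cases hs : sched G p {j | 1 ≤ queue G p A Q0 t j} i
  · have hD : (cumDep G p A Q0 (t+1) i : ℤ) = cumDep G p A Q0 t i + 1 := by
      rw [cumDep_succ_eq, if_pos hs]; push_cast; ring
    linarith
  · obtain ⟨j, hadj, hlt, hsj⟩ := sched_elim G p (show i ∈ {j | 1 ≤ queue G p A Q0 t j} from hq) hs
    have hjmem : j ∈ hpNbrs G p i := by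
      simp only [hpNbrs, Finset.mem_filter, SimpleGraph.mem_neighborFinset]
      exact ⟨hadj, hlt⟩
    have hDj : (cumDep G p A Q0 (t+1) j : ℤ) = cumDep G p A Q0 t j + 1 := by
      rw [cumDep_succ_eq, if_pos hsj]; push_cast; ring
    have hsum : (1:ℤ) ≤ ∑ k ∈ hpNbrs G p i, ((cumDep G p A Q0 (t+1) k : ℤ) - cumDep G p A Q0 t k) := by
      have h5 : (cumDep G p A Q0 (t+1) j : ℤ) - cumDep G p A Q0 t j ≤
          ∑ k ∈ hpNbrs G p i, ((cumDep G p A Q0 (t+1) k : ℤ) - cumDep G p A Q0 t k) :=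
        Finset.single_le_sum (fun k _ => hnn k) hjmem
      linarith
    linarith [hnn i]

lemma counting (i : V) (s t : ℕ) (hst : s ≤ t)
    (hb : ∀ τ, s ≤ τ → τ < t → 1 ≤ queue G p A Q0 τ i) :
    (t:ℤ) - s ≤ ((cumDep G p A Q0 t i : ℤ) - cumDep G p A Q0 s i) +
      ∑ j ∈ hpNbrs G p i, ((cumDep G p A Q0 t j : ℤ) - cumDep G p A Q0 s j) := by
  induction t, hst using Nat.le_induction with
  | base => simp
  | succ t hst ih =>
    have h1 := ih (fun τ h1 h2 => hb τ h1 (h2.trans (Nat.lt_succ_self t)))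
    have h2 := slot_bound G p A Q0 i t (hb t hst (Nat.lt_succ_self t))
    have h3 : ∑ j ∈ hpNbrs G p i, ((cumDep G p A Q0 (t+1) j : ℤ) - cumDep G p A Q0 s j)
        = ∑ j ∈ hpNbrs G p i, ((cumDep G p A Q0 (t+1) j : ℤ) - cumDep G p A Q0 t j)
          + ∑ j ∈ hpNbrs G p i, ((cumDep G p A Q0 t j : ℤ) - cumDep G p A Q0 s j) := by
      rw [← Finset.sum_add_distrib]
      exact Finset.sum_congr rfl fun j _ => by ring
    push_cast
    push_cast at h1 h2 h3
    linarith

end aux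

lemma abs_rate_bound (f : ℕ → ℝ) (c δ : ℝ) (hδ : 0 < δ)
    (hf : Tendsto (fun t : ℕ => f t / t) atTop (𝓝 c)) :
    ∀ᶠ t : ℕ in atTop, |f t - c * t| ≤ δ * t := by
  obtain ⟨N, hN⟩ := Metric.tendsto_atTop.1 hf δ hδ
  filter_upwards [eventually_ge_atTop (max N 1)] with t ht
  have ht1 : 1 ≤ t := le_trans (le_max_right _ _) ht
  have htN : N ≤ t := le_trans (le_max_left _ _) ht
  have hpos : (0:ℝ) < t := by exact_mod_cast ht1
  have hd := hN t htN
  rw [Real.dist_eq] at hd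
  have heq : f t - c * t = (f t / t - c) * t := by field_simp
  rw [heq, abs_mul, abs_of_pos hpos]
  exact mul_le_mul_of_nonneg_right hd.le hpos.le
set_option maxHeartbeats 1000000 in
lemma key_step [Fintype V] [DecidableEq V] (G : SimpleGraph V) [DecidableRel G.Adj]
    (p : V → ℕ) (A : V → ℕ → ℕ) (Q0 : V → ℕ)
    (hAmono : ∀ l, Monotone (A l)) (Amax : ℕ) (hAbd : ∀ l t, A l (t+1) - A l t ≤ Amax)
    (lam : V → ℝ) (hlam0 : ∀ i, 0 ≤ lam i) (i : V)
    (hcap : lam i + ∑ j ∈ hpNbrs G p i, lam j ≤ 1)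
    (hrA : Tendsto (fun t : ℕ => (A i t : ℝ) / t) atTop (𝓝 (lam i)))
    (hD : ∀ j ∈ hpNbrs G p i, Tendsto (fun t : ℕ => (cumDep G p A Q0 t j : ℝ) / t)
      atTop (𝓝 (lam j))) :
    Tendsto (fun t : ℕ => (cumDep G p A Q0 t i : ℝ) / t) atTop (𝓝 (lam i)) := by
  set S := hpNbrs G p i with hS
  set n : ℝ := (S.card : ℝ) with hn
  have hn0 : (0:ℝ) ≤ n := Nat.cast_nonneg _
  suffices hQ : Tendsto (fun t : ℕ => ((queue G p A Q0 t i : ℤ) : ℝ) / t) atTop (𝓝 0) by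
    have heq : ∀ t : ℕ, (cumDep G p A Q0 t i : ℝ)/t
        = (Q0 i : ℝ)/t + (A i t:ℝ)/t - ((queue G p A Q0 t i : ℤ):ℝ)/t := by
      intro t
      simp only [queue]
      push_cast
      ring
    have h0 : Tendsto (fun t : ℕ => (Q0 i : ℝ)/t) atTop (𝓝 0) :=
      tendsto_const_div_atTop_nhds_zero_nat _
    have hcomb := (h0.add hrA).sub hQ
    have : (0 : ℝ) + lam i - 0 = lam i := by ring
    rw [this] at hcomb
    exact hcomb.congr fun t => (heq t).symm
  rw [Metric.tendsto_atTop]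
  intro ε hε
  set δ : ℝ := ε / (8 * (n+1)) with hδdef
  have hδ : 0 < δ := by positivity
  have hAev := abs_rate_bound (fun t => (A i t : ℝ)) (lam i) δ hδ hrA
  have hDev : ∀ᶠ t : ℕ in atTop, ∀ j ∈ S,
      |((cumDep G p A Q0 t j : ℕ):ℝ) - lam j * t| ≤ δ * t := by
    rw [eventually_all_finset]
    intro j hj
    exact abs_rate_bound (fun t => (cumDep G p A Q0 t j : ℝ)) (lam j) δ hδ (hD j hj)
  obtain ⟨T0, hT0⟩ := eventually_atTop.1 ((hAev.and hDev).and (eventually_ge_atTop 1))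
  have hT0' : ∀ t, T0 ≤ t → |((A i t : ℕ):ℝ) - lam i * t| ≤ δ * t ∧
      (∀ j ∈ S, |((cumDep G p A Q0 t j : ℕ):ℝ) - lam j * t| ≤ δ * t) ∧ 1 ≤ t :=
    fun t ht => ⟨(hT0 t ht).1.1, (hT0 t ht).1.2, (hT0 t ht).2⟩
  set C : ℝ := (Q0 i : ℝ) + (A i T0 : ℝ) + (Amax : ℝ) with hC
  have hC0 : 0 ≤ C := by positivity
  have hQnn := queue_nonneg G p A Q0 hAmono
  -- key pathwise bound
  have key : ∀ t, T0 ≤ t → ((queue G p A Q0 t i : ℤ):ℝ) ≤ C + 2*(n+1)*δ*t := by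
    intro t ht
    have main : ∀ s, T0 ≤ s → s ≤ t → ((queue G p A Q0 s i : ℤ):ℝ) ≤ C →
        (∀ τ, s ≤ τ → τ < t → 1 ≤ queue G p A Q0 τ i) →
        ((queue G p A Q0 t i : ℤ):ℝ) ≤ C + 2*(n+1)*δ*t := by
      intro s hs1 hs2 hqs hb
      have hcount := counting G p A Q0 i s t hs2 hb
      have hcountR : (t:ℝ) - s ≤ ((cumDep G p A Q0 t i:ℝ) - cumDep G p A Q0 s i) +
          ∑ j ∈ S, ((cumDep G p A Q0 t j:ℝ) - cumDep G p A Q0 s j) := by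
        exact_mod_cast hcount
      have hA1 := (hT0' t ht).1
      have hA2 := (hT0' s hs1).1
      have hDt := (hT0' t ht).2.1
      have hDs := (hT0' s hs1).2.1
      have hts : (s:ℝ) ≤ t := by exact_mod_cast hs2
      have hδst : δ * s ≤ δ * t := mul_le_mul_of_nonneg_left hts hδ.le
      have hsum : ∑ j ∈ S, ((cumDep G p A Q0 t j:ℝ) - cumDep G p A Q0 s j)
          ≤ (∑ j ∈ S, lam j) * ((t:ℝ) - s) + n * (2*δ*t) := by
        have h1 : ∀ j ∈ S, (cumDep G p A Q0 t j:ℝ) - cumDep G p A Q0 s j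
            ≤ lam j * ((t:ℝ)-s) + 2*δ*t := by
          intro j hj
          have ha := abs_le.1 (hDt j hj)
          have hb' := abs_le.1 (hDs j hj)
          have h2 : δ * s ≤ δ * t := hδst
          nlinarith [ha.1, ha.2, hb'.1, hb'.2]
        calc ∑ j ∈ S, ((cumDep G p A Q0 t j:ℝ) - cumDep G p A Q0 s j)
            ≤ ∑ j ∈ S, (lam j * ((t:ℝ)-s) + 2*δ*t) := Finset.sum_le_sum h1
          _ = (∑ j ∈ S, lam j) * ((t:ℝ)-s) + n * (2*δ*t) := by
              rw [Finset.sum_add_distrib, ← Finset.sum_mul, Finset.sum_const, nsmul_eq_mul]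
      have hqrel : ((queue G p A Q0 t i : ℤ):ℝ)
          = ((queue G p A Q0 s i : ℤ):ℝ) + ((A i t:ℝ) - A i s)
            - ((cumDep G p A Q0 t i:ℝ) - cumDep G p A Q0 s i) := by
        simp only [queue]
        push_cast
        ring
      have hAb : (A i t:ℝ) - A i s ≤ lam i * ((t:ℝ)-s) + 2*δ*t := by
        have ha := abs_le.1 hA1
        have hb' := abs_le.1 hA2
        linarith [ha.2, hb'.1]
      have hfin : (lam i + ∑ j ∈ S, lam j) * ((t:ℝ)-s) - ((t:ℝ)-s) ≤ 0 := by
        have h1 : (0:ℝ) ≤ (t:ℝ) - s := by linarith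
        nlinarith [hcap]
      linarith [hqrel.le, hqrel.ge, hcountR, hsum, hAb, hqs, hfin]
    by_cases hemp : ∃ τ, T0 ≤ τ ∧ τ < t ∧ queue G p A Q0 τ i ≤ 0
    · set P : ℕ → Prop := fun τ => T0 ≤ τ ∧ τ < t ∧ queue G p A Q0 τ i ≤ 0 with hP
      obtain ⟨τ0, hτ0⟩ := hemp
      have hPs' : P (Nat.findGreatest P t) :=
        Nat.findGreatest_spec (le_of_lt hτ0.2.1) hτ0
      set s' := Nat.findGreatest P t with hs'
      apply main (s' + 1)
      · have h := hPs'.1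
        omega
      · exact hPs'.2.1
      · -- queue (s'+1) i ≤ C
        have hq0 : queue G p A Q0 s' i ≤ 0 := hPs'.2.2
        have hAstep : A i (s'+1) ≤ A i s' + Amax := by
          have h1 := hAbd i s'
          have h2 := hAmono i (Nat.le_succ s')
          omega
        have hDmono := cumDep_mono_succ G p A Q0 s' i
        have hqq : queue G p A Q0 (s'+1) i ≤ (Amax : ℤ) := by
          simp only [queue] at hq0 ⊢
          have h1 : (A i (s'+1) : ℤ) ≤ (A i s' : ℤ) + Amax := by exact_mod_cast hAstep
          have h2 : (cumDep G p A Q0 s' i : ℤ) ≤ cumDep G p A Q0 (s'+1) i := by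
            exact_mod_cast hDmono
          linarith
        have : ((queue G p A Q0 (s'+1) i : ℤ):ℝ) ≤ (Amax : ℝ) := by exact_mod_cast hqq
        have hq0' : (0:ℝ) ≤ (Q0 i : ℝ) + (A i T0 : ℝ) := by positivity
        rw [hC]; linarith
      · intro τ h1 h2
        by_contra hcon
        push_neg at hcon
        have hPτ : P τ := ⟨by omega, h2, by omega⟩
        exact Nat.findGreatest_is_greatest (by omega) (le_of_lt h2) hPτ
    · push_neg at hemp
      apply main T0 le_rfl ht
      · have : queue G p A Q0 T0 i ≤ (Q0 i : ℤ) + A i T0 := by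
          simp only [queue]
          have : (0:ℤ) ≤ cumDep G p A Q0 T0 i := by positivity
          linarith
        have hR : ((queue G p A Q0 T0 i : ℤ):ℝ) ≤ (Q0 i : ℝ) + A i T0 := by exact_mod_cast this
        have : (0:ℝ) ≤ (Amax:ℝ) := by positivity
        rw [hC]; linarith
      · intro τ h1 h2
        have := hemp τ h1 h2
        omega
  -- conclude
  obtain ⟨T2, hT2⟩ := exists_nat_ge (2 * C / ε)
  refine ⟨max T0 T2, fun t ht => ?_⟩
  have ht0 : T0 ≤ t := le_trans (le_max_left _ _) ht
  have ht2 : T2 ≤ t := le_trans (le_max_right _ _) ht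
  have ht1 : 1 ≤ t := le_trans (hT0' T0 le_rfl).2.2 ht0
  have htpos : (0:ℝ) < t := by exact_mod_cast ht1
  have hkey := key t ht0
  have hqnnR : (0:ℝ) ≤ ((queue G p A Q0 t i : ℤ):ℝ) := by exact_mod_cast hQnn t i
  rw [Real.dist_eq, sub_zero, abs_of_nonneg (div_nonneg hqnnR htpos.le), div_lt_iff₀ htpos]
  have h2δ : 2*(n+1)*δ = ε/4 := by
    rw [hδdef]
    field_simp
    ring
  have htT2 : (T2:ℝ) ≤ t := by exact_mod_cast ht2
  have hCt : C ≤ ε/2 * t := by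
    have h1 : 2 * C / ε ≤ (t:ℝ) := le_trans hT2 htT2
    rw [div_le_iff₀ hε] at h1
    linarith
  calc ((queue G p A Q0 t i : ℤ):ℝ) ≤ C + 2*(n+1)*δ*t := hkey
    _ = C + ε/4 * t := by rw [h2δ]
    _ ≤ ε/2 * t + ε/4 * t := by linarith
    _ < ε * t := by nlinarith
/-- Theorem 1, pathwise version: if the arrivals have uniformly bounded
increments, `A_i(t)/t → λ_i` for every link `i`, and `λ ∈ Λ_p`, then under the queue
dynamics with maximal scheduling with priority vector `p` every link is rate stable:
`D_i(t)/t → λ_i` for every `i`. -/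
theorem rate_stable_of_mem_LambdaP [Fintype V] [DecidableEq V] [Nonempty V]
    (G : SimpleGraph V) [DecidableRel G.Adj] (p : V ≃ Fin (Fintype.card V))
    (A : V → ℕ → ℕ) (Q0 : V → ℕ)
    (hA0 : ∀ l, A l 0 = 0) (hAmono : ∀ l, Monotone (A l))
    (Amax : ℕ) (hAbd : ∀ l t, A l (t + 1) - A l t ≤ Amax)
    (lam : V → ℝ) (hlam : lam ∈ LambdaP G (pv p))
    (hrate : ∀ i, Tendsto (fun t : ℕ => (A i t : ℝ) / (t : ℝ)) atTop (𝓝 (lam i))) :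
    ∀ i, Tendsto (fun t : ℕ => (cumDep G (pv p) A Q0 t i : ℝ) / (t : ℝ))
      atTop (𝓝 (lam i)) := by
  obtain ⟨hlam0, hcap⟩ := hlam
  have H : ∀ n, ∀ i, pv p i < n →
      Tendsto (fun t : ℕ => (cumDep G (pv p) A Q0 t i : ℝ) / (t : ℝ)) atTop (𝓝 (lam i)) := by
    intro n
    induction n with
    | zero => intro i h; omega
    | succ n ih =>
      intro i hi
      refine key_step G (pv p) A Q0 hAmono Amax hAbd lam hlam0 i (hcap i) (hrate i) ?_
      intro j hj
      apply ih
      have hjlt : pv p j < pv p i := (Finset.mem_filter.1 hj).2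
      omega
  exact fun i => H (pv p i + 1) i (Nat.lt_succ_self _)
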